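/- Let U be an invertible 4n×4n matrix over a field F, partitioned as U = [A;B;C;D] with each of A, B, C, D of size n×4n, and U⁻¹ = (E | F | G | H) with each of E, F, G, H of size 4n×n (so that, e.g., AE = Iₙ, AF = AG = AH = 0, BF = Iₙ, CG = Iₙ, DH = Iₙ, and all other cross products vanish). Then over F[z] the memory-3 generator matrix G(z) = A + Bz + Cz² + Dz³ satisfies: (i) G(z)·K(z) = 0, where K(z) = (F | G | H) − (E | H | G)z − (H | E | F)z² + (G | F | E)z³ is a 4n×3n polynomial control matrix; and (ii) G(z)·E = Iₙ, so G(z) has a right polynomial inverse and the convolutional (4n, n) code generated by G(z) is non-catastrophic. -/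

import Mathlib

open Matrix Polynomial

private lemma fromColumns_map' {R S m n₁ n₂ : Type*} (A : Matrix m n₁ R) (B : Matrix m n₂ R)
    (f : R → S) : (fromCols A B).map f = fromCols (A.map f) (B.map f) := by
  ext i j; cases j <;> rfl

private lemma fromColumns_smul' {R m n₁ n₂ : Type*} [Semiring R] (r : R)
    (A : Matrix m n₁ R) (B : Matrix m n₂ R) :
    r • fromCols A B = fromCols (r • A) (r • B) := by
  ext i j; cases j <;> rfl

private lemma fromColumns_sub' {R m n₁ n₂ : Type*} [Ring R]
    (A A' : Matrix m n₁ R) (B B' : Matrix m n₂ R) :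
    fromCols A B - fromCols A' B' = fromCols (A - A') (B - B') := by
  ext i j; cases j <;> rfl

private lemma fromColumns_add' {R m n₁ n₂ : Type*} [Ring R]
    (A A' : Matrix m n₁ R) (B B' : Matrix m n₂ R) :
    fromCols A B + fromCols A' B' = fromCols (A + A') (B + B') := by
  ext i j; cases j <;> rfl

/-- Let `U = [A; B; C; D]` be an invertible `4n × 4n` matrix with each block of
size `n × 4n`, and `U⁻¹ = (E | F | G | H)` with each block of size `4n × n`.
Then over `K[z]` the memory-3 generator matrix `G(z) = A + Bz + Cz² + Dz³`
satisfies `G(z) * K(z) = 0` for the `4n × 3n` control matrix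
`K(z) = (F | G | H) - (E | H | G)z - (H | E | F)z² + (G | F | E)z³`,
and `G(z) * E = Iₙ`, so `G(z)` has a right polynomial inverse and the
convolutional `(4n, n)` code it generates is non-catastrophic. -/
theorem stmt_19 {K : Type*} [Field K] {n : ℕ}
    (A B C D : Matrix (Fin n) (Fin (4 * n)) K)
    (E F G H : Matrix (Fin (4 * n)) (Fin n) K)
    (hUV : Matrix.fromRows A (Matrix.fromRows B (Matrix.fromRows C D)) *
      Matrix.fromCols E (Matrix.fromCols F (Matrix.fromCols G H)) = 1)
    (hVU : Matrix.fromCols E (Matrix.fromCols F (Matrix.fromCols G H)) *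
      Matrix.fromRows A (Matrix.fromRows B (Matrix.fromRows C D)) = 1) :
    (A.map Polynomial.C + (Polynomial.X : Polynomial K) • B.map Polynomial.C +
        ((Polynomial.X : Polynomial K) ^ 2) • C.map Polynomial.C +
        ((Polynomial.X : Polynomial K) ^ 3) • D.map Polynomial.C) *
      ((Matrix.fromCols F (Matrix.fromCols G H)).map Polynomial.C -
        (Polynomial.X : Polynomial K) •
          (Matrix.fromCols E (Matrix.fromCols H G)).map Polynomial.C -
        ((Polynomial.X : Polynomial K) ^ 2) •
          (Matrix.fromCols H (Matrix.fromCols E F)).map Polynomial.C +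
        ((Polynomial.X : Polynomial K) ^ 3) •
          (Matrix.fromCols G (Matrix.fromCols F E)).map Polynomial.C) = 0 ∧
    (A.map Polynomial.C + (Polynomial.X : Polynomial K) • B.map Polynomial.C +
        ((Polynomial.X : Polynomial K) ^ 2) • C.map Polynomial.C +
        ((Polynomial.X : Polynomial K) ^ 3) • D.map Polynomial.C) *
      E.map Polynomial.C = 1 := by
  clear hVU
  rw [fromRows_mul_fromCols, ← fromBlocks_one, fromBlocks_inj] at hUV
  obtain ⟨hAE, h2, h3, h4⟩ := hUV
  rw [mul_fromCols, ← fromCols_zero, fromCols_inj.eq_iff] at h2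
  obtain ⟨hAF, h22⟩ := h2
  rw [mul_fromCols, ← fromCols_zero, fromCols_inj.eq_iff] at h22
  obtain ⟨hAG, hAH⟩ := h22
  rw [fromRows_mul, ← fromRows_zero, fromRows_inj.eq_iff] at h3
  obtain ⟨hBE, h3⟩ := h3
  rw [fromRows_mul, ← fromRows_zero, fromRows_inj.eq_iff] at h3
  obtain ⟨hCE, hDE⟩ := h3
  rw [fromRows_mul_fromCols, ← fromBlocks_one, fromBlocks_inj] at h4
  obtain ⟨hBF, h42, h43, h44⟩ := h4
  rw [mul_fromCols, ← fromCols_zero, fromCols_inj.eq_iff] at h42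
  obtain ⟨hBG, hBH⟩ := h42
  rw [fromRows_mul, ← fromRows_zero, fromRows_inj.eq_iff] at h43
  obtain ⟨hCF, hDF⟩ := h43
  rw [fromRows_mul_fromCols, ← fromBlocks_one, fromBlocks_inj] at h44
  obtain ⟨hCG, hCH, hDG, hDH⟩ := h44
  have key0 : ∀ (P : Matrix (Fin n) (Fin (4*n)) K) (Q : Matrix (Fin (4*n)) (Fin n) K),
      P * Q = 0 → P.map (Polynomial.C (R := K)) * Q.map Polynomial.C = 0 := by
    intro P Q h
    rw [← Matrix.map_mul (f := (Polynomial.C : K →+* Polynomial K)), h]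
    exact Matrix.map_zero _ (map_zero _)
  have key1 : ∀ (P : Matrix (Fin n) (Fin (4*n)) K) (Q : Matrix (Fin (4*n)) (Fin n) K),
      P * Q = 1 → P.map (Polynomial.C (R := K)) * Q.map Polynomial.C = 1 := by
    intro P Q h
    rw [← Matrix.map_mul (f := (Polynomial.C : K →+* Polynomial K)), h]
    exact Matrix.map_one _ (map_zero _) (map_one _)
  refine ⟨?_, ?_⟩
  · rw [fromColumns_map', fromColumns_map', fromColumns_map', fromColumns_map',
      fromColumns_map', fromColumns_map', fromColumns_map', fromColumns_map',
      fromColumns_smul', fromColumns_smul', fromColumns_smul', fromColumns_smul',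
      fromColumns_smul', fromColumns_smul',
      fromColumns_sub', fromColumns_sub', fromColumns_sub', fromColumns_sub',
      fromColumns_add', fromColumns_add',
      mul_fromCols, mul_fromCols, ← fromCols_zero (n₁ := Fin n),
      ← fromCols_zero (n₁ := Fin n), fromCols_inj.eq_iff, fromCols_inj.eq_iff]
    refine ⟨?_, ?_, ?_⟩ <;>
    · simp only [Matrix.mul_sub, Matrix.mul_add, Matrix.add_mul, Matrix.smul_mul, Matrix.mul_smul, smul_smul,
        key0 A F hAF, key0 A G hAG, key0 A H hAH,
        key1 A E hAE, key0 B E hBE, key1 B F hBF, key0 B G hBG, key0 B H hBH,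
        key0 C E hCE, key0 C F hCF, key1 C G hCG, key0 C H hCH,
        key0 D E hDE, key0 D F hDF, key0 D G hDG, key1 D H hDH,
        smul_zero]
      simp only [zero_add]
      module
  · simp only [Matrix.add_mul, Matrix.smul_mul, key1 A E hAE, key0 B E hBE, key0 C E hCE,
      key0 D E hDE, smul_zero, add_zero]
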